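/- Assume that neither 1 nor −1 is an eigenvalue of the self-adjoint operator T'_M = d_{T,M} d_{O,M}*. Then the ranges of the adjoint boundary operators intersect trivially: d_{T,M}*(ℓ²(V')) ∩ d_{O,M}*(ℓ²(V')) = {0}. -/

import Mathlib

/- Setting: G' = (V', A') a connected locally finite graph, arcs = darts of a simple
graph `G`; `e.fst` = origin, `e.snd` = terminus, `e.symm` = reversed arc; `α` a weight
on arcs with `Σ_{a : o(a)=v} |α(a)|² = 1`, and `M` a set of marked vertices. ℓ²(A')
and ℓ²(V') are the `lp _ 2` spaces; the marked boundary operators and the shift are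
characterized by their pointwise formulas. -/

noncomputable section
open scoped ComplexConjugate ComplexInnerProductSpace Classical
open Complex Filter Topology ContinuousLinearMap

namespace GroverStmtB

/-- ℓ²(V') -/
abbrev lV (V : Type) : Type := lp (fun _ : V => ℂ) 2

variable {V : Type} (G : SimpleGraph V)

instance instCFCRealLV : ContinuousFunctionalCalculus ℝ (lV V →L[ℂ] lV V) IsSelfAdjoint :=
  IsSelfAdjoint.instContinuousFunctionalCalculus

/-- ℓ²(A') where A' is the set of symmetric arcs (darts) of `G`. -/
abbrev lA : Type := lp (fun _ : G.Dart => ℂ) 2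

/-- the weight condition `Σ_{a : o(a)=v} |α(a)|² = 1` for every vertex `v`. -/
def IsWeight (α : G.Dart → ℂ) : Prop :=
  ∀ v : V, ∑' a : {a : G.Dart // a.fst = v}, ‖α a.1‖ ^ 2 = 1

/-- `(S'ψ)(e) = ψ(ē)` -/
def IsShift (S : lA G →L[ℂ] lA G) : Prop :=
  ∀ (ψ : lA G) (e : G.Dart), S ψ e = ψ e.symm

variable (α : G.Dart → ℂ) (M : Set V)

/-- `(d_{T,M}ψ)(v) = Σ_{e : t(e)=v} α(ē)ψ(e)` for `v ∉ M`, `= 0` for `v ∈ M`. -/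
def IsMarkedT (dTM : lA G →L[ℂ] lV V) : Prop :=
  (∀ (ψ : lA G) (v : V), v ∉ M →
      dTM ψ v = ∑' e : {e : G.Dart // e.snd = v}, α e.1.symm * ψ e.1) ∧
  (∀ (ψ : lA G) (v : V), v ∈ M → dTM ψ v = 0)

/-- `(d_{O,M}ψ)(v) = Σ_{e : o(e)=v} α(e)ψ(e)` for `v ∉ M`, `= 0` for `v ∈ M`. -/
def IsMarkedO (dOM : lA G →L[ℂ] lV V) : Prop :=
  (∀ (ψ : lA G) (v : V), v ∉ M →
      dOM ψ v = ∑' e : {e : G.Dart // e.fst = v}, α e.1 * ψ e.1) ∧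
  (∀ (ψ : lA G) (v : V), v ∈ M → dOM ψ v = 0)

/-- the Dirichlet transition operator `T'_M = d_{T,M} d_{O,M}*`. -/
def TM (dTM dOM : lA G →L[ℂ] lV V) : lV V →L[ℂ] lV V := dTM ∘L adjoint dOM

/-- `exp(s·i·arccos(T'_M))` via the continuous functional calculus for `T'_M`. -/
def expArc (dTM dOM : lA G →L[ℂ] lV V) (s : ℂ) : lV V →L[ℂ] lV V :=
  NormedSpace.exp ((s * Complex.I) • cfc Real.arccos (TM G dTM dOM))

/-- `(2(1 − T'_M²))^(−1/2)` via the continuous functional calculus for `T'_M`. -/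
def invSqrt (dTM dOM : lA G →L[ℂ] lV V) : lV V →L[ℂ] lV V :=
  cfc (fun x : ℝ => (Real.sqrt (2 * (1 - x ^ 2)))⁻¹) (TM G dTM dOM)

/-- `d_{±,M}* = (d_{T,M}* − d_{O,M}*·exp(±i·arccos T'_M))·(2(1−T'_M²))^(−1/2)`,
with `s = 1` for the `+` sign and `s = −1` for the `−` sign. -/
def dpmStar (dTM dOM : lA G →L[ℂ] lV V) (s : ℂ) : lV V →L[ℂ] lA G :=
  (adjoint dTM - adjoint dOM ∘L expArc G dTM dOM s) ∘L invSqrt G dTM dOM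

/-- the quantum walk `U'_M = S'(2 d_{T,M}* d_{T,M} − 1)` induced by the Dirichlet
random walk. -/
def UM (S : lA G →L[ℂ] lA G) (dTM : lA G →L[ℂ] lV V) : lA G →L[ℂ] lA G :=
  S ∘L ((2 : ℂ) • ((adjoint dTM) ∘L dTM) - 1)

section Aux

variable {V : Type} {G : SimpleGraph V} [∀ v : V, Fintype (G.neighborSet v)]

/-- darts with origin `v` ≃ neighbors of `v` -/
def fstEquiv (v : V) : {a : G.Dart // a.fst = v} ≃ G.neighborSet v where
  toFun a := ⟨a.1.snd, by have h := a.1.adj; rw [a.2] at h; exact h⟩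
  invFun w := ⟨⟨(v, w.1), w.2⟩, rfl⟩
  left_inv := by rintro ⟨⟨⟨x, y⟩, h⟩, rfl⟩; rfl
  right_inv := by rintro ⟨w, hw⟩; rfl

instance instFintypeFst (v : V) : Fintype {a : G.Dart // a.fst = v} :=
  Fintype.ofEquiv _ (fstEquiv v).symm

/-- darts with terminus `v` ≃ darts with origin `v`, via reversal -/
def sndEquivFst (v : V) : {e : G.Dart // e.snd = v} ≃ {a : G.Dart // a.fst = v} where
  toFun e := ⟨e.1.symm, e.2⟩
  invFun a := ⟨a.1.symm, a.2⟩
  left_inv e := Subtype.ext (SimpleGraph.Dart.symm_symm _)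
  right_inv a := Subtype.ext (SimpleGraph.Dart.symm_symm _)

instance instFintypeSnd (v : V) : Fintype {e : G.Dart // e.snd = v} :=
  Fintype.ofEquiv _ (sndEquivFst v).symm

variable {α : G.Dart → ℂ} {M : Set V} {dTM dOM : lA G →L[ℂ] lV V}

theorem markedT_single (hdTM : IsMarkedT G α M dTM) (e : G.Dart) (v : V) :
    dTM (lp.single 2 e (1 : ℂ)) v = if e.snd = v ∧ v ∉ M then α e.symm else 0 := by
  by_cases hv : v ∈ M
  · rw [hdTM.2 _ _ hv]
    simp [hv]
  · rw [hdTM.1 _ _ hv, tsum_fintype]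
    by_cases hev : e.snd = v
    · rw [Finset.sum_eq_single (⟨e, hev⟩ : {e : G.Dart // e.snd = v})]
      · simp [lp.single_apply_self, hev, hv]
      · intro b _ hb
        have hbe : b.1 ≠ e := fun h => hb (Subtype.ext h)
        rw [lp.single_apply_ne 2 e _ hbe, mul_zero]
      · intro h; exact absurd (Finset.mem_univ _) h
    · rw [if_neg (fun h => hev h.1)]
      apply Finset.sum_eq_zero
      intro b _
      have hbe : b.1 ≠ e := fun h => hev (by rw [← h]; exact b.2)
      rw [lp.single_apply_ne 2 e _ hbe, mul_zero]

theorem markedO_single (hdOM : IsMarkedO G α M dOM) (e : G.Dart) (v : V) :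
    dOM (lp.single 2 e (1 : ℂ)) v = if e.fst = v ∧ v ∉ M then α e else 0 := by
  by_cases hv : v ∈ M
  · rw [hdOM.2 _ _ hv]
    simp [hv]
  · rw [hdOM.1 _ _ hv, tsum_fintype]
    by_cases hev : e.fst = v
    · rw [Finset.sum_eq_single (⟨e, hev⟩ : {a : G.Dart // a.fst = v})]
      · simp [lp.single_apply_self, hev, hv]
      · intro b _ hb
        have hbe : b.1 ≠ e := fun h => hb (Subtype.ext h)
        rw [lp.single_apply_ne 2 e _ hbe, mul_zero]
      · intro h; exact absurd (Finset.mem_univ _) h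
    · rw [if_neg (fun h => hev h.1)]
      apply Finset.sum_eq_zero
      intro b _
      have hbe : b.1 ≠ e := fun h => hev (by rw [← h]; exact b.2)
      rw [lp.single_apply_ne 2 e _ hbe, mul_zero]

theorem adjT_apply (hdTM : IsMarkedT G α M dTM) (f : lV V) (e : G.Dart) :
    adjoint dTM f e = if e.snd ∈ M then 0 else conj (α e.symm) * f e.snd := by
  have h1 : adjoint dTM f e = ⟪lp.single 2 e (1 : ℂ), adjoint dTM f⟫ := by
    rw [lp.inner_single_left]
    simp [RCLike.inner_apply]
  rw [h1, ContinuousLinearMap.adjoint_inner_right, lp.inner_eq_tsum]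
  rw [tsum_eq_single e.snd (fun v hv => by
    rw [RCLike.inner_apply, markedT_single hdTM,
      if_neg (fun h => hv h.1.symm)]
    simp)]
  rw [RCLike.inner_apply, markedT_single hdTM]
  by_cases h : e.snd ∈ M
  · simp [h]
  · simp [h, mul_comm]

theorem adjO_apply (hdOM : IsMarkedO G α M dOM) (f : lV V) (e : G.Dart) :
    adjoint dOM f e = if e.fst ∈ M then 0 else conj (α e) * f e.fst := by
  have h1 : adjoint dOM f e = ⟪lp.single 2 e (1 : ℂ), adjoint dOM f⟫ := by
    rw [lp.inner_single_left]
    simp [RCLike.inner_apply]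
  rw [h1, ContinuousLinearMap.adjoint_inner_right, lp.inner_eq_tsum]
  rw [tsum_eq_single e.fst (fun v hv => by
    rw [RCLike.inner_apply, markedO_single hdOM,
      if_neg (fun h => hv h.1.symm)]
    simp)]
  rw [RCLike.inner_apply, markedO_single hdOM]
  by_cases h : e.fst ∈ M
  · simp [h]
  · simp [h, mul_comm]

theorem sum_weights_snd (hα : IsWeight G α) (v : V) :
    ∑ e : {e : G.Dart // e.snd = v}, α e.1.symm * conj (α e.1.symm) = 1 := by
  have h := hα v
  rw [tsum_fintype] at h
  have h2 : ∑ e : {e : G.Dart // e.snd = v}, α e.1.symm * conj (α e.1.symm)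
      = ∑ a : {a : G.Dart // a.fst = v}, α a.1 * conj (α a.1) :=
    Fintype.sum_equiv (sndEquivFst v) _ _ (fun e => rfl)
  have h3 : ∀ z : ℂ, z * conj z = ((‖z‖ ^ 2 : ℝ) : ℂ) := fun z => by
    rw [Complex.mul_conj]
    norm_cast
    rw [Complex.normSq_eq_norm_sq]
  rw [h2]
  simp only [h3]
  rw [← Complex.ofReal_sum, h, Complex.ofReal_one]

theorem sum_weights_fst (hα : IsWeight G α) (v : V) :
    ∑ a : {a : G.Dart // a.fst = v}, α a.1 * conj (α a.1) = 1 := by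
  rw [← sum_weights_snd hα v]
  exact (Fintype.sum_equiv (sndEquivFst v) _ _ (fun e => rfl)).symm

theorem PT_apply (hdTM : IsMarkedT G α M dTM) (hα : IsWeight G α) (f : lV V) (v : V) :
    dTM (adjoint dTM f) v = if v ∈ M then 0 else f v := by
  by_cases hv : v ∈ M
  · rw [hdTM.2 _ _ hv, if_pos hv]
  · rw [hdTM.1 _ _ hv, tsum_fintype, if_neg hv]
    have hterm : ∀ e : {e : G.Dart // e.snd = v},
        α e.1.symm * adjoint dTM f e.1 = α e.1.symm * conj (α e.1.symm) * f v := by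
      intro e
      rw [adjT_apply hdTM, e.2, if_neg hv, mul_assoc]
    rw [Finset.sum_congr rfl (fun e _ => hterm e), ← Finset.sum_mul,
      sum_weights_snd hα v, one_mul]

theorem PO_apply (hdOM : IsMarkedO G α M dOM) (hα : IsWeight G α) (f : lV V) (v : V) :
    dOM (adjoint dOM f) v = if v ∈ M then 0 else f v := by
  by_cases hv : v ∈ M
  · rw [hdOM.2 _ _ hv, if_pos hv]
  · rw [hdOM.1 _ _ hv, tsum_fintype, if_neg hv]
    have hterm : ∀ e : {a : G.Dart // a.fst = v},
        α e.1 * adjoint dOM f e.1 = α e.1 * conj (α e.1) * f v := by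
      intro e
      rw [adjO_apply hdOM, e.2, if_neg hv, mul_assoc]
    rw [Finset.sum_congr rfl (fun e _ => hterm e), ← Finset.sum_mul,
      sum_weights_fst hα v, one_mul]

theorem swap_apply (hdTM : IsMarkedT G α M dTM) (hdOM : IsMarkedO G α M dOM)
    (h : lV V) (v : V) :
    dOM (adjoint dTM h) v = dTM (adjoint dOM h) v := by
  by_cases hv : v ∈ M
  · rw [hdOM.2 _ _ hv, hdTM.2 _ _ hv]
  · rw [hdOM.1 _ _ hv, hdTM.1 _ _ hv, tsum_fintype, tsum_fintype]
    refine Fintype.sum_equiv (sndEquivFst v).symm _ _ (fun a => ?_)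
    rw [adjT_apply hdTM, adjO_apply hdOM]
    simp [sndEquivFst, SimpleGraph.Dart.symm_symm]

theorem AA (hdTM : IsMarkedT G α M dTM) (hα : IsWeight G α) (f₀ : lV V) :
    adjoint dTM (dTM (adjoint dTM f₀)) = adjoint dTM f₀ := by
  apply lp.ext
  funext e
  rw [adjT_apply hdTM, adjT_apply hdTM]
  by_cases h : e.snd ∈ M
  · rw [if_pos h, if_pos h]
  · rw [if_neg h, if_neg h, PT_apply hdTM hα, if_neg h]

theorem BB (hdOM : IsMarkedO G α M dOM) (hα : IsWeight G α) (g₀ : lV V) :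
    adjoint dOM (dOM (adjoint dOM g₀)) = adjoint dOM g₀ := by
  apply lp.ext
  funext e
  rw [adjO_apply hdOM, adjO_apply hdOM]
  by_cases h : e.fst ∈ M
  · rw [if_pos h, if_pos h]
  · rw [if_neg h, if_neg h, PO_apply hdOM hα, if_neg h]

end Aux

/-- if neither `1` nor `−1` is an eigenvalue of `T'_M = d_{T,M} d_{O,M}*`,
then `d_{T,M}*(ℓ²(V')) ∩ d_{O,M}*(ℓ²(V')) = {0}`. -/
theorem statement12 {V : Type} (G : SimpleGraph V)
    [∀ v : V, Fintype (G.neighborSet v)] (hconn : G.Connected)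
    (α : G.Dart → ℂ) (M : Set V) (hα : IsWeight G α)
    (dTM dOM : lA G →L[ℂ] lV V)
    (hdTM : IsMarkedT G α M dTM) (hdOM : IsMarkedO G α M dOM)
    (h₁ : ¬ Module.End.HasEigenvalue (TM G dTM dOM).toLinearMap 1)
    (h₂ : ¬ Module.End.HasEigenvalue (TM G dTM dOM).toLinearMap (-1)) :
    LinearMap.range (adjoint dTM).toLinearMap ⊓ LinearMap.range (adjoint dOM).toLinearMap = ⊥ := by
  rw [eq_bot_iff]
  intro ψ hψ
  rw [Submodule.mem_inf] at hψ
  obtain ⟨⟨f₀, hf₀⟩, g₀, hg₀⟩ := hψ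
  rw [Submodule.mem_bot]
  have hAf : adjoint dTM (dTM ψ) = ψ := by
    rw [← hf₀]; exact AA hdTM hα f₀
  have hBg : adjoint dOM (dOM ψ) = ψ := by
    rw [← hg₀]; exact BB hdOM hα g₀
  set f := dTM ψ with hf
  set g := dOM ψ with hg
  have hTg : TM G dTM dOM g = f := by
    show dTM (adjoint dOM g) = f
    rw [hBg]
  have hTf : TM G dTM dOM f = g := by
    apply lp.ext
    funext v
    show dTM (adjoint dOM f) v = g v
    rw [← swap_apply hdTM hdOM, hAf]
  have key : ∀ x : lV V, TM G dTM dOM x = x → x = 0 := by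
    intro x hx
    by_contra hne
    exact h₁ (Module.End.hasEigenvalue_of_hasEigenvector
      ⟨Module.End.mem_eigenspace_iff.mpr (by simpa using hx), hne⟩)
  have key' : ∀ x : lV V, TM G dTM dOM x = -x → x = 0 := by
    intro x hx
    by_contra hne
    exact h₂ (Module.End.hasEigenvalue_of_hasEigenvector
      ⟨Module.End.mem_eigenspace_iff.mpr (by simpa using hx), hne⟩)
  have h1' : f + g = 0 := key _ (by rw [map_add, hTf, hTg, add_comm])
  have h2' : f - g = 0 := key' _ (by rw [map_sub, hTf, hTg, neg_sub])
  have hfz : f = 0 := by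
    have h2f : f + f = 0 := by
      have := congrArg₂ (· + ·) h1' h2'
      simpa [add_add_sub_cancel] using this
    have : (2 : ℂ) • f = 0 := by rw [two_smul]; exact h2f
    simpa [smul_eq_zero] using this
  rw [← hAf, hfz, map_zero]

end GroverStmtB
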